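/- Closure of ESN under componentwise sign changes: if X ∼ ESN_p(μ, Σ, λ, τ) and Λ_s = Diag(s) for s ∈ {-1,1}^p, then Λ_s X ∼ ESN_p(Λ_s μ, Λ_s Σ Λ_s, Λ_s λ, τ); equivalently, for all x ∈ ℝ^p, ESN_p(Λ_s x; μ, Σ, λ, τ) = ESN_p(x; Λ_s μ, Λ_s Σ Λ_s, Λ_s λ, τ). -/

import Mathlib

open MeasureTheory Real Matrix Filter

/-- Standard normal cdf Φ. -/
noncomputable def stdCDF (t : ℝ) : ℝ :=
  ∫ x in Set.Iic t, ProbabilityTheory.gaussianPDFReal 0 1 x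

/-- Univariate normal density with mean `m` and variance `v`. -/
noncomputable def normPDF (m v x : ℝ) : ℝ :=
  (Real.sqrt (2 * π * v))⁻¹ * Real.exp (-((x - m) ^ 2 / (2 * v)))

/-- Multivariate normal density with mean `μ` and covariance `S`. -/
noncomputable def mvnPDF {n : Type*} [Fintype n] [DecidableEq n] (μ : n → ℝ) (S : Matrix n n ℝ)
    (x : n → ℝ) : ℝ :=
  (2 * π) ^ (-(Fintype.card n : ℝ) / 2) * S.det ^ (-(1 : ℝ) / 2) *
    Real.exp (-(dotProduct (x - μ) (S⁻¹ *ᵥ (x - μ))) / 2)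

/-- Extended skew-normal density. -/
noncomputable def esnPDF {n : Type*} [Fintype n] [DecidableEq n] (μ : n → ℝ)
    (S : Matrix n n ℝ) (hS : S.PosDef) (l : n → ℝ) (τ : ℝ) (y : n → ℝ) : ℝ :=
  (stdCDF (τ / Real.sqrt (1 + dotProduct l l)))⁻¹ * mvnPDF μ S y *
    stdCDF (τ + dotProduct l (((hS.posSemidef.1.eigenvectorUnitary.1 *
      diagonal ((↑) ∘ (√·) ∘ hS.posSemidef.1.eigenvalues) *
      (star hS.posSemidef.1.eigenvectorUnitary : Matrix n n ℝ)))⁻¹ *ᵥ (y - μ)))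

lemma dot_mulVec_conj {p : ℕ} (D M : Matrix (Fin p) (Fin p) ℝ) (u w : Fin p → ℝ) :
    dotProduct (D *ᵥ u) (M *ᵥ (D *ᵥ w)) = dotProduct u ((Dᵀ * M * D) *ᵥ w) := by
  rw [mulVec_mulVec, ← mulVec_mulVec, dotProduct_mulVec, ← transpose_transpose M,
    ← vecMul_transpose, vecMul_vecMul, ← dotProduct_mulVec, mulVec_mulVec,
    transpose_transpose, Matrix.mul_assoc]

open scoped MatrixOrder

lemma esn_sqrt_eq {p : ℕ} {S : Matrix (Fin p) (Fin p) ℝ} (hS : S.PosDef) :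
    hS.posSemidef.1.eigenvectorUnitary.1 *
      diagonal ((↑) ∘ (√·) ∘ hS.posSemidef.1.eigenvalues) *
      (star hS.posSemidef.1.eigenvectorUnitary : Matrix (Fin p) (Fin p) ℝ) = CFC.sqrt S := by
  rw [CFC.sqrt_eq_cfc, cfc_nnreal_eq_real _ S, hS.posSemidef.1.cfc_eq]
  simp only [IsHermitian.cfc, Unitary.conjStarAlgAut_apply]
  congr 3
  funext i
  simp [Real.coe_sqrt, Real.coe_toNNReal', max_eq_left (hS.posSemidef.eigenvalues_nonneg i)]

/-- closure of the ESN under componentwise sign changes: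
`ESN_p(Λ_s x; μ, Σ, λ, τ) = ESN_p(x; Λ_s μ, Λ_s Σ Λ_s, Λ_s λ, τ)`. -/
theorem esn_sign_change {p : ℕ} (μ : Fin p → ℝ) (S : Matrix (Fin p) (Fin p) ℝ)
    (hS : S.PosDef) (l : Fin p → ℝ) (τ : ℝ)
    (d : Fin p → ℝ) (hd : ∀ i, d i = 1 ∨ d i = -1)
    (hSs : (Matrix.diagonal d * S * Matrix.diagonal d).PosDef)
    (x : Fin p → ℝ) :
    esnPDF μ S hS l τ (fun i => d i * x i) =
      esnPDF (fun i => d i * μ i) (Matrix.diagonal d * S * Matrix.diagonal d)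
        hSs (fun i => d i * l i) τ x := by
  set D := Matrix.diagonal d with hD
  set R := hS.posSemidef.1.eigenvectorUnitary.1 *
    diagonal ((↑) ∘ (√·) ∘ hS.posSemidef.1.eigenvalues) *
    (star hS.posSemidef.1.eigenvectorUnitary : Matrix (Fin p) (Fin p) ℝ) with hRdef
  have hRsq : R = CFC.sqrt S := esn_sqrt_eq hS
  have hdd : ∀ i, d i * d i = 1 := fun i => by rcases hd i with h | h <;> rw [h] <;> norm_num
  have hDD : D * D = 1 := by
    rw [hD, diagonal_mul_diagonal]
    have h1 : (fun i => d i * d i) = (1 : Fin p → ℝ) := funext hdd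
    rw [h1]; exact diagonal_one
  have hDT : Dᵀ = D := Matrix.diagonal_transpose d
  have hDinv : D⁻¹ = D := Matrix.inv_eq_right_inv hDD
  have hmv : ∀ u : Fin p → ℝ, (fun i => d i * u i) = D *ᵥ u := by
    intro u; funext i; simp [hD, Matrix.mulVec_diagonal]
  -- the shifted vector
  set u : Fin p → ℝ := x - fun i => d i * μ i with hudef
  have hu : (fun i => d i * x i) - μ = D *ᵥ u := by
    funext i
    simp only [Pi.sub_apply, hudef, hD, Matrix.mulVec_diagonal]
    rw [mul_sub, ← mul_assoc, hdd i, one_mul]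
  -- square root of the transformed matrix
  have hRps : (D * R * D).PosSemidef := by
    have := (by rw [hRsq]; exact (CFC.sqrt_nonneg S).posSemidef : R.PosSemidef).mul_mul_conjTranspose_same D
    rwa [conjTranspose_eq_transpose_of_trivial, hDT] at this
  have hsqrt : hSs.posSemidef.1.eigenvectorUnitary.1 *
      diagonal ((↑) ∘ (√·) ∘ hSs.posSemidef.1.eigenvalues) *
      (star hSs.posSemidef.1.eigenvectorUnitary : Matrix (Fin p) (Fin p) ℝ) = D * R * D := by
    rw [esn_sqrt_eq hSs]
    refine (CFC.sqrt_eq_iff _ _ hSs.posSemidef.nonneg hRps.nonneg).mpr ?_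
    rw [← pow_two]
    have hRR : R * R = S := by rw [hRsq]; exact CFC.sqrt_mul_sqrt_self S hS.posSemidef.nonneg
    calc (D * R * D) ^ 2 = D * (R * (D * D) * R) * D := by rw [pow_two]; noncomm_ring
      _ = D * S * D := by rw [hDD, Matrix.mul_one, hRR]
  -- inverses
  have hinv : ∀ M : Matrix (Fin p) (Fin p) ℝ, (D * M * D)⁻¹ = D * M⁻¹ * D := by
    intro M
    rw [Matrix.mul_inv_rev, Matrix.mul_inv_rev, hDinv, Matrix.mul_assoc]
  -- determinant
  have hdet : (D * S * D).det = S.det := by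
    have h1 : D.det * D.det = 1 := by rw [← det_mul, hDD, det_one]
    rw [det_mul, det_mul]
    calc D.det * S.det * D.det = D.det * D.det * S.det := by ring
      _ = S.det := by rw [h1, one_mul]
  -- dot products
  have hll : dotProduct (fun i => d i * l i) (fun i => d i * l i) = dotProduct l l := by
    simp only [dotProduct]
    refine Finset.sum_congr rfl fun i _ => ?_
    rw [mul_mul_mul_comm, hdd i, one_mul]
  have hdot : ∀ a c : Fin p → ℝ, dotProduct (D *ᵥ a) c = dotProduct a (D *ᵥ c) := by
    intro a c
    rw [dotProduct_comm, dotProduct_mulVec, ← mulVec_transpose, hDT, dotProduct_comm]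
  have hconj : ∀ (M : Matrix (Fin p) (Fin p) ℝ) (a w : Fin p → ℝ),
      dotProduct (D *ᵥ a) ((D * M * D) *ᵥ w) = dotProduct a (M *ᵥ (D *ᵥ w)) := by
    intro M a w
    rw [← mulVec_mulVec, ← mulVec_mulVec, hdot, mulVec_mulVec, hDD, one_mulVec]
  -- quadratic form
  have hquad : dotProduct (D *ᵥ u) (S⁻¹ *ᵥ (D *ᵥ u)) = dotProduct u ((D * S * D)⁻¹ *ᵥ u) := by
    rw [hinv, dot_mulVec_conj, hDT]
  -- skew term
  have hskew : dotProduct l (R⁻¹ *ᵥ (D *ᵥ u)) =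
      dotProduct (D *ᵥ l) ((D * R * D)⁻¹ *ᵥ u) := by
    rw [hinv, hconj]
  unfold esnPDF mvnPDF
  rw [hll, hdet, hu, hquad, hmv l, hsqrt, hskew]
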